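/- Let d = 1 and γ ∈ (1/2, 3/4), and let ξ ∈ ℝ \ {0}. Then for every bounded measurable function k : [0,∞) → ℝ, ∫_{ℝ} k(|η|/|ξ|) H(η|ξ) dη = ∫_0^∞ k(r) g_{1,γ}(r) dr, where g_{1,γ}(r) = c_{1,γ}(|r − r²|^{2γ−2} + (r + r²)^{2γ−2}). In particular, the pushforward of the probability measure H(η|ξ)dη under η ↦ |η|/|ξ| has Lebesgue density g_{1,γ} on (0,∞). -/

import Mathlib

open MeasureTheory Set

/-- The constant `c_{1,γ}` (the constant `c_{d,γ}` with `d = 1`). -/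
noncomputable def c1g (γ : ℝ) : ℝ :=
  Real.pi ^ (-(1 : ℝ)/2) * Real.Gamma (2*γ - 1) * (Real.Gamma ((1 + 1 - 2*γ)/2))^2 /
    (Real.Gamma ((1 + 2 - 4*γ)/2) * (Real.Gamma ((2*γ - 1)/2))^2)

/-- `H(η|ξ) = c_{1,γ} |η|^{2γ−2} |ξ−η|^{2γ−2} |ξ|^{3−4γ}` for `d = 1`. -/
noncomputable def H1 (γ : ℝ) (η ξ : ℝ) : ℝ :=
  c1g γ * |η| ^ (2*γ - 1 - 1) * |ξ - η| ^ (2*γ - 1 - 1) * |ξ| ^ (1 + 2 - 4*γ)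

/-- The density `g_{1,γ}(r) = c_{1,γ}(|r − r²|^{2γ−2} + (r + r²)^{2γ−2})`. -/
noncomputable def g1 (γ : ℝ) (r : ℝ) : ℝ :=
  c1g γ * (|r - r^2| ^ (2*γ - 2) + (r + r^2) ^ (2*γ - 2))

lemma c1g_pos {γ : ℝ} (hγ : γ ∈ Set.Ioo (1/2 : ℝ) (3/4 : ℝ)) : 0 < c1g γ := by
  obtain ⟨h1, h2⟩ := hγ
  have hπ : (0:ℝ) < Real.pi ^ (-(1:ℝ)/2) := Real.rpow_pos_of_pos Real.pi_pos _
  have hg1 : 0 < Real.Gamma (2*γ - 1) := Real.Gamma_pos_of_pos (by linarith)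
  have hg2 : 0 < Real.Gamma ((1+1-2*γ)/2) := Real.Gamma_pos_of_pos (by linarith)
  have hg3 : 0 < Real.Gamma ((1+2-4*γ)/2) := Real.Gamma_pos_of_pos (by linarith)
  have hg4 : 0 < Real.Gamma ((2*γ-1)/2) := Real.Gamma_pos_of_pos (by linarith)
  unfold c1g; positivity

lemma measurable_H1 (γ ξ : ℝ) : Measurable (fun η => H1 γ η ξ) := by
  unfold H1; fun_prop

lemma H1_nonneg {γ : ℝ} (hγ : γ ∈ Set.Ioo (1/2 : ℝ) (3/4 : ℝ)) (η ξ : ℝ) :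
    0 ≤ H1 γ η ξ := by
  have := c1g_pos hγ
  unfold H1; positivity

lemma g1_nonneg {γ : ℝ} (hγ : γ ∈ Set.Ioo (1/2 : ℝ) (3/4 : ℝ)) {r : ℝ} (hr : 0 < r) :
    0 ≤ g1 γ r := by
  have := c1g_pos hγ
  unfold g1; positivity

lemma H1_mul (γ : ℝ) {ξ : ℝ} (hξ : ξ ≠ 0) (u : ℝ) :
    |ξ| * H1 γ (ξ * u) ξ = c1g γ * |u| ^ (2*γ - 2) * |1 - u| ^ (2*γ - 2) := by
  have hpos : 0 < |ξ| := abs_pos.mpr hξ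
  unfold H1
  rw [show (2*γ - 1 - 1) = 2*γ - 2 by ring, show ξ - ξ * u = ξ * (1 - u) by ring,
    abs_mul, abs_mul, Real.mul_rpow (abs_nonneg _) (abs_nonneg _),
    Real.mul_rpow (abs_nonneg _) (abs_nonneg _)]
  have key : |ξ| * (|ξ| ^ (2*γ-2) * (|ξ| ^ (2*γ-2) * |ξ| ^ (1+2-4*γ))) = 1 := by
    nth_rewrite 1 [← Real.rpow_one |ξ|]
    rw [← Real.rpow_add hpos, ← Real.rpow_add hpos, ← Real.rpow_add hpos,
      show (1 : ℝ) + (2*γ-2 + (2*γ-2 + (1+2-4*γ))) = 0 by ring, Real.rpow_zero]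
  linear_combination (c1g γ * |u| ^ (2*γ-2) * |1-u| ^ (2*γ-2)) * key

lemma g1_comb {γ : ℝ} {r : ℝ} (hr : 0 < r) :
    c1g γ * r ^ (2*γ - 2) * |1 - r| ^ (2*γ - 2)
      + c1g γ * r ^ (2*γ - 2) * (1 + r) ^ (2*γ - 2) = g1 γ r := by
  unfold g1
  have h1 : |r - r^2| = r * |1 - r| := by
    rw [show r - r^2 = r * (1 - r) by ring, abs_mul, abs_of_pos hr]
  have h2 : r + r^2 = r * (1 + r) := by ring
  rw [h1, h2, Real.mul_rpow hr.le (abs_nonneg _), Real.mul_rpow hr.le (by linarith)]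
  ring

lemma key {γ : ℝ} (hγ : γ ∈ Set.Ioo (1/2 : ℝ) (3/4 : ℝ)) {ξ : ℝ} (hξ : ξ ≠ 0)
    (k : ℝ → ENNReal) (hk : Measurable k) :
    ∫⁻ η : ℝ, k (|η| / |ξ|) * ENNReal.ofReal (H1 γ η ξ)
      = ∫⁻ r in Set.Ioi (0:ℝ), k r * ENNReal.ofReal (g1 γ r) := by
  have hpos : 0 < |ξ| := abs_pos.mpr hξ
  set G : ℝ → ENNReal :=
    fun u => k |u| * ENNReal.ofReal (c1g γ * |u| ^ (2*γ-2) * |1 - u| ^ (2*γ-2)) with hG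
  have hGmeas : Measurable G := by
    apply Measurable.mul
    · exact hk.comp measurable_abs
    · fun_prop
  have hFmeas : Measurable fun η => k (|η| / |ξ|) * ENNReal.ofReal (H1 γ η ξ) := by
    apply Measurable.mul
    · exact hk.comp (measurable_abs.div_const _)
    · exact (measurable_H1 γ ξ).ennreal_ofReal
  -- Step A: substitute η = ξ * u
  have stepA : ∫⁻ η : ℝ, k (|η| / |ξ|) * ENNReal.ofReal (H1 γ η ξ) = ∫⁻ u : ℝ, G u := by
    calc ∫⁻ η : ℝ, k (|η| / |ξ|) * ENNReal.ofReal (H1 γ η ξ)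
        = ∫⁻ η, k (|η| / |ξ|) * ENNReal.ofReal (H1 γ η ξ)
            ∂(ENNReal.ofReal |ξ| • Measure.map (ξ * ·) volume) := by
          rw [Real.smul_map_volume_mul_left hξ]
      _ = ENNReal.ofReal |ξ| * ∫⁻ η, k (|η| / |ξ|) * ENNReal.ofReal (H1 γ η ξ)
            ∂(Measure.map (ξ * ·) volume) := lintegral_smul_measure _ _
      _ = ENNReal.ofReal |ξ| * ∫⁻ u, k (|ξ * u| / |ξ|) * ENNReal.ofReal (H1 γ (ξ * u) ξ) := by
          rw [lintegral_map hFmeas (measurable_const_mul ξ)]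
      _ = ∫⁻ u, ENNReal.ofReal |ξ| * (k (|ξ * u| / |ξ|) * ENNReal.ofReal (H1 γ (ξ * u) ξ)) := by
          have h2 : Measurable fun u => k (|ξ * u| / |ξ|) * ENNReal.ofReal (H1 γ (ξ * u) ξ) :=
            hFmeas.comp (measurable_const_mul ξ)
          rw [lintegral_const_mul _ h2]
      _ = ∫⁻ u, G u := by
          refine lintegral_congr fun u => ?_
          have h1 : |ξ * u| / |ξ| = |u| := by
            rw [abs_mul]; field_simp
          rw [h1, hG]
          rw [← mul_assoc, mul_comm (ENNReal.ofReal |ξ|) (k |u|), mul_assoc,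
            ← ENNReal.ofReal_mul (abs_nonneg ξ), H1_mul γ hξ u]
  rw [stepA]
  -- Step B: split ℝ into positive and negative half-lines
  have hsplit : ∫⁻ u : ℝ, G u = (∫⁻ u in Set.Ioi (0:ℝ), G u) + ∫⁻ u in Set.Iio (0:ℝ), G u :=
    calc ∫⁻ u : ℝ, G u
        = (∫⁻ u in Set.Ioi (0:ℝ), G u) + ∫⁻ u in (Set.Ioi (0:ℝ))ᶜ, G u :=
          (lintegral_add_compl G (measurableSet_Ioi : MeasurableSet (Set.Ioi (0:ℝ)))).symm
      _ = (∫⁻ u in Set.Ioi (0:ℝ), G u) + ∫⁻ u in Set.Iio (0:ℝ), G u := by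
          rw [compl_Ioi, Measure.restrict_congr_set Iio_ae_eq_Iic.symm]
  have hneg : ∫⁻ u in Set.Iio (0:ℝ), G u = ∫⁻ r in Set.Ioi (0:ℝ), G (-r) := by
    have hmp : MeasurePreserving (Neg.neg : ℝ → ℝ) volume volume :=
      Measure.measurePreserving_neg _
    have hemb : MeasurableEmbedding (Neg.neg : ℝ → ℝ) :=
      (Homeomorph.neg ℝ).measurableEmbedding
    have := hmp.setLIntegral_comp_preimage_emb hemb G (Set.Iio 0)
    rw [show (Neg.neg : ℝ → ℝ) ⁻¹' Set.Iio 0 = Set.Ioi 0 by ext x; simp] at this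
    exact this.symm
  rw [hsplit, hneg]
  have hadd : (∫⁻ u in Set.Ioi (0:ℝ), G u) + ∫⁻ r in Set.Ioi (0:ℝ), G (-r)
      = ∫⁻ r in Set.Ioi (0:ℝ), (G r + G (-r)) := (lintegral_add_left hGmeas _).symm
  rw [hadd]
  refine setLIntegral_congr_fun measurableSet_Ioi (fun r hr => ?_)
  have hr' : (0:ℝ) < r := hr
  have hc := c1g_pos hγ
  have hA : 0 ≤ c1g γ * r ^ (2*γ-2) * |1 - r| ^ (2*γ-2) :=
    mul_nonneg (mul_nonneg hc.le (Real.rpow_nonneg hr'.le _)) (Real.rpow_nonneg (abs_nonneg _) _)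
  have hB : 0 ≤ c1g γ * r ^ (2*γ-2) * (1 + r) ^ (2*γ-2) :=
    mul_nonneg (mul_nonneg hc.le (Real.rpow_nonneg hr'.le _)) (Real.rpow_nonneg (by linarith) _)
  simp only [hG, abs_neg, abs_of_pos hr', show (1:ℝ) - -r = 1 + r by ring]
  rw [← mul_add, show |1 + r| = 1 + r from abs_of_pos (by linarith),
    ← ENNReal.ofReal_add hA hB, g1_comb (γ := γ) hr']

lemma measurable_g1 (γ : ℝ) : Measurable (g1 γ) := by
  unfold g1; fun_prop

theorem stmt2 (γ : ℝ) (hγ : γ ∈ Set.Ioo (1/2 : ℝ) (3/4 : ℝ)) (ξ : ℝ) (hξ : ξ ≠ 0) :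
    (∀ k : ℝ → ℝ, Measurable k → (∃ C : ℝ, ∀ x, |k x| ≤ C) →
      ∫ η : ℝ, k (|η| / |ξ|) * H1 γ η ξ = ∫ r in Set.Ioi (0 : ℝ), k r * g1 γ r) ∧
    Measure.map (fun η : ℝ => |η| / |ξ|)
        ((volume : Measure ℝ).withDensity fun η => ENNReal.ofReal (H1 γ η ξ)) =
      ((volume : Measure ℝ).restrict (Set.Ioi 0)).withDensity
        fun r => ENNReal.ofReal (g1 γ r) := by
  have hT : Measurable fun η : ℝ => |η| / |ξ| := measurable_abs.div_const _
  have part2 : Measure.map (fun η : ℝ => |η| / |ξ|)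
      ((volume : Measure ℝ).withDensity fun η => ENNReal.ofReal (H1 γ η ξ)) =
      ((volume : Measure ℝ).restrict (Set.Ioi 0)).withDensity
        fun r => ENNReal.ofReal (g1 γ r) := by
    ext s hs
    rw [Measure.map_apply hT hs, withDensity_apply _ (hT hs), withDensity_apply _ hs]
    have hkind : Measurable (s.indicator (1 : ℝ → ENNReal)) := measurable_one.indicator hs
    calc ∫⁻ η in (fun η : ℝ => |η| / |ξ|) ⁻¹' s, ENNReal.ofReal (H1 γ η ξ) ∂volume
        = ∫⁻ η : ℝ, s.indicator 1 (|η| / |ξ|) * ENNReal.ofReal (H1 γ η ξ) := by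
          rw [← lintegral_indicator (hT hs)]
          refine lintegral_congr fun η => ?_
          by_cases h : |η| / |ξ| ∈ s
          · simp [Set.indicator_of_mem (show η ∈ (fun η : ℝ => |η| / |ξ|) ⁻¹' s from h),
              Set.indicator_of_mem h]
          · simp [Set.indicator_of_notMem (show η ∉ (fun η : ℝ => |η| / |ξ|) ⁻¹' s from h),
              Set.indicator_of_notMem h]
      _ = ∫⁻ r in Set.Ioi (0:ℝ), s.indicator 1 r * ENNReal.ofReal (g1 γ r) :=
          key hγ hξ _ hkind
      _ = ∫⁻ r in s, ENNReal.ofReal (g1 γ r) ∂(volume.restrict (Set.Ioi 0)) := by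
          rw [← lintegral_indicator hs]
          refine lintegral_congr fun r => ?_
          by_cases h : r ∈ s <;> simp [h]
  refine ⟨?_, part2⟩
  intro k hk _
  have hH : Measurable fun η => (H1 γ η ξ).toNNReal := (measurable_H1 γ ξ).real_toNNReal
  have hg : Measurable fun r => (g1 γ r).toNNReal := (measurable_g1 γ).real_toNNReal
  calc ∫ η : ℝ, k (|η| / |ξ|) * H1 γ η ξ
      = ∫ η : ℝ, (H1 γ η ξ).toNNReal • k (|η| / |ξ|) := by
        refine integral_congr_ae (ae_of_all _ fun η => ?_)
        show k (|η| / |ξ|) * H1 γ η ξ = (H1 γ η ξ).toNNReal • k (|η| / |ξ|)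
        rw [NNReal.smul_def, smul_eq_mul, Real.coe_toNNReal _ (H1_nonneg hγ η ξ), mul_comm]
    _ = ∫ η, k (|η| / |ξ|)
          ∂((volume : Measure ℝ).withDensity fun η => ((H1 γ η ξ).toNNReal : ENNReal)) :=
        (integral_withDensity_eq_integral_smul hH _).symm
    _ = ∫ η, k (|η| / |ξ|)
          ∂((volume : Measure ℝ).withDensity fun η => ENNReal.ofReal (H1 γ η ξ)) := rfl
    _ = ∫ x, k x ∂(Measure.map (fun η : ℝ => |η| / |ξ|)
          ((volume : Measure ℝ).withDensity fun η => ENNReal.ofReal (H1 γ η ξ))) :=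
        (integral_map hT.aemeasurable hk.aestronglyMeasurable).symm
    _ = ∫ x, k x ∂(((volume : Measure ℝ).restrict (Set.Ioi 0)).withDensity
          fun r => ENNReal.ofReal (g1 γ r)) := by rw [part2]
    _ = ∫ x, (g1 γ x).toNNReal • k x ∂((volume : Measure ℝ).restrict (Set.Ioi 0)) := by
        rw [show (fun r : ℝ => ENNReal.ofReal (g1 γ r))
            = fun r => ((g1 γ r).toNNReal : ENNReal) from rfl,
          integral_withDensity_eq_integral_smul hg]
    _ = ∫ r in Set.Ioi (0:ℝ), k r * g1 γ r := by
        refine setIntegral_congr_fun measurableSet_Ioi fun r hr => ?_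
        show (g1 γ r).toNNReal • k r = k r * g1 γ r
        rw [NNReal.smul_def, smul_eq_mul, Real.coe_toNNReal _ (g1_nonneg hγ hr), mul_comm]
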